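/- Let H be a dense subspace of a Hilbert space and (·,·) another semi-inner product on H with kernel N = {x : (x,x)=0}, and let Λ : H → H/N be the quotient map onto the quotient pre-Hilbert space H_N with inner product induced by (·,·). Then there exists a positive operator L : H → H̄ (into the completion) with (x,y) = ⟨x, L y⟩ for all x,y ∈ H if and only if Λ has a weak adjoint Λ* : H_N → H̄, i.e., there is a linear map Λ* with ⟨Λ x, z⟩ = ⟨x, Λ* z⟩ for all x ∈ H, z ∈ H_N. -/

import Mathlib

open scoped InnerProductSpace ComplexOrder

/-- Cauchy–Schwarz-type vanishing: if `B y y = 0` then `B x y = 0`. -/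
lemma aux_vanish {H : Type*} [NormedAddCommGroup H] [InnerProductSpace ℂ H]
    (B : H →ₗ⋆[ℂ] H →ₗ[ℂ] ℂ)
    (hherm : ∀ x y : H, B x y = starRingEnd ℂ (B y x))
    (hpsd : ∀ x : H, 0 ≤ B x x) {x y : H} (hy : B y y = 0) : B x y = 0 := by
  set a : ℂ := B x y with ha
  by_contra hne
  set r : ℝ := Complex.normSq a with hr
  have hna : 0 < r := Complex.normSq_pos.mpr hne
  set t : ℝ := (B x x).re / r + 1 with ht
  have hm : a * (starRingEnd ℂ) a = (r : ℂ) := Complex.mul_conj a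
  have hexp : B (x + (-(t:ℂ) * (starRingEnd ℂ) a) • y) (x + (-(t:ℂ) * (starRingEnd ℂ) a) • y)
      = B x x - 2 * t * (r : ℂ) := by
    have h1 : B y x = (starRingEnd ℂ) a := by rw [ha, hherm y x]
    simp only [map_add, LinearMap.add_apply, map_smulₛₗ, LinearMap.smul_apply, smul_eq_mul, hy,
      h1, ← ha, map_mul, map_neg, Complex.conj_conj, Complex.conj_ofReal, RingHom.id_apply]
    linear_combination (-(2:ℂ) * t) * hm
  have hpos := hpsd (x + (-(t:ℂ) * (starRingEnd ℂ) a) • y)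
  rw [hexp, Complex.nonneg_iff] at hpos
  have hre : 0 ≤ (B x x).re - 2 * t * r := by simpa using hpos.1
  have hBxx : 0 ≤ (B x x).re := by
    have := (Complex.nonneg_iff.mp (hpsd x)).1; simpa using this
  have hsum : t * r = (B x x).re + r := by rw [ht, add_mul, div_mul_cancel₀ _ hna.ne', one_mul]
  nlinarith

/-- Let `H` be a pre-Hilbert space, densely and isometrically embedded
(via `ι`) into a Hilbert space `Hb` (its completion), and let `B` be another semi-inner
product on `H` (a positive-semidefinite hermitian sesquilinear form) with kernel
`N = {x | B x x = 0}`, and let `Λ : H → H/N =: H_N` be the quotient map, so that the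
inner product induced by `B` on `H_N` satisfies `⟨Λx, Λy⟩ = B x y`.  Then there is a
positive operator `L : H → Hb` with `B x y = ⟪x, Ly⟫` for all `x, y` if and only if
`Λ` has a weak adjoint `Λ* : H_N → Hb`, i.e. a linear map with
`⟨Λx, z⟩ = ⟪x, Λ* z⟫` for all `x ∈ H`, `z ∈ H_N` (equivalently, taking `z = Λ y`,
`B x y = ⟪x, Λ*(Λ y)⟫` for all `x, y ∈ H`). -/
theorem adj_iff_pos {H : Type*} [NormedAddCommGroup H] [InnerProductSpace ℂ H]
    {Hb : Type*} [NormedAddCommGroup Hb] [InnerProductSpace ℂ Hb] [CompleteSpace Hb]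
    (ι : H →ₗᵢ[ℂ] Hb) (hdense : DenseRange ι)
    (B : H →ₗ⋆[ℂ] H →ₗ[ℂ] ℂ)
    (hherm : ∀ x y : H, B x y = starRingEnd ℂ (B y x))
    (hpsd : ∀ x : H, 0 ≤ B x x)
    (N : Submodule ℂ H) (hN : (N : Set H) = {x : H | B x x = 0}) :
    (∃ L : H →ₗ[ℂ] Hb, (∀ x : H, 0 ≤ ⟪ι x, L x⟫_ℂ) ∧
        ∀ x y : H, B x y = ⟪ι x, L y⟫_ℂ) ↔
      (∃ Λs : (H ⧸ N) →ₗ[ℂ] Hb,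
        ∀ x y : H, B x y = ⟪ι x, Λs (Submodule.Quotient.mk y)⟫_ℂ) := by
  constructor
  · rintro ⟨L, _, hL⟩
    -- `L` vanishes on `N`, hence descends to the quotient.
    have hK : Dense ((LinearMap.range ι.toLinearMap : Submodule ℂ Hb) : Set Hb) := by
      simpa [LinearMap.coe_range, DenseRange] using hdense
    have hle : N ≤ LinearMap.ker L := by
      intro y hyN
      have hyy : B y y = 0 := by
        have : y ∈ (N : Set H) := hyN
        rw [hN] at this
        exact this
      have : L y = 0 := by
        refine hK.eq_zero_of_inner_right ℂ fun v hv => ?_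
        obtain ⟨x, hx⟩ := LinearMap.mem_range.mp hv
        have : B x y = 0 := aux_vanish B hherm hpsd hyy
        rw [← hx]
        simpa [← hL x y] using this
      simpa [LinearMap.mem_ker] using this
    refine ⟨N.liftQ L hle, fun x y => ?_⟩
    rw [Submodule.liftQ_apply]
    exact hL x y
  · rintro ⟨Λs, hΛ⟩
    refine ⟨Λs ∘ₗ N.mkQ, fun x => ?_, fun x y => ?_⟩
    · rw [LinearMap.comp_apply, Submodule.mkQ_apply, ← hΛ x x]
      exact hpsd x
    · rw [LinearMap.comp_apply, Submodule.mkQ_apply]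
      exact hΛ x y
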